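/- arXiv:1810.02732 — 2 statements merged into one kernel-verified Lean document; each statement's English description precedes it below -/
import Mathlib

section
/- For all integers n ≥ 1 and r ≥ 0, D^{n}(a·x^{r}) = a·x^{r}·y^{n}·w^{n} · (r + x·w^{−1}) · ∑_{k=0}^{n−1} Q_{n,k}(r + x·w^{−1}) · y^{k}, as an identity in the field K, where Q_{n,k}(r + x·w^{−1}) denotes the evaluation of the polynomial Q_{n,k} at the element r + x·w^{−1} ∈ K. -/
open Polynomial

/-- The Ramanujan–Shor polynomials `Q n k ∈ ℚ[x]`. -/
noncomputable def ramanujanShorQ : ℕ → ℤ → Polynomial ℚ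
  | 0, _ => 0
  | 1, k => if k = 0 then 1 else 0
  | (n + 2), k =>
      if 0 ≤ k ∧ k ≤ (n : ℤ) + 1 then
        (Polynomial.X + Polynomial.C ((n : ℚ) + 1)) * ramanujanShorQ (n + 1) k
          + Polynomial.C (((n : ℤ) + k : ℤ) : ℚ) * ramanujanShorQ (n + 1) (k - 1)
      else 0

/-- The images of the four variables `a, x, y, w` in the fraction field of `ℚ[a,x,y,w]`. -/
noncomputable def gv (i : Fin 4) : FractionRing (MvPolynomial (Fin 4) ℚ) :=
  algebraMap (MvPolynomial (Fin 4) ℚ) (FractionRing (MvPolynomial (Fin 4) ℚ)) (MvPolynomial.X i)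


lemma Q_neg (n : ℕ) (k : ℤ) (hk : k < 0) : ramanujanShorQ n k = 0 := by
  match n with
  | 0 => simp [ramanujanShorQ]
  | 1 => rw [ramanujanShorQ, if_neg (by omega)]
  | (m+2) => rw [ramanujanShorQ, if_neg (by omega)]

lemma Q_ge (n : ℕ) (k : ℤ) (hk : (n:ℤ) ≤ k) : ramanujanShorQ n k = 0 := by
  match n with
  | 0 => simp [ramanujanShorQ]
  | 1 => rw [ramanujanShorQ, if_neg (by omega)]
  | (m+2) => rw [ramanujanShorQ, if_neg (by push_cast at hk ⊢; omega)]

lemma Q_rec (m : ℕ) (k : ℤ) (h0 : 0 ≤ k) (h1 : k ≤ (m:ℤ)+1) :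
    ramanujanShorQ (m+2) k = (X + C ((m:ℚ)+1)) * ramanujanShorQ (m+1) k
      + C (((m:ℤ)+k : ℤ) : ℚ) * ramanujanShorQ (m+1) (k-1) := by
  rw [ramanujanShorQ, if_pos ⟨h0, h1⟩]

lemma sum_step {A : Type*} [CommRing A] [Algebra ℚ A] (t y : A) (m : ℕ) :
    ∑ k ∈ Finset.range (m+2), aeval t (ramanujanShorQ (m+2) (k:ℤ)) * y^k
    = ∑ k ∈ Finset.range (m+1),
        ((t + (m:A) + 1) * aeval t (ramanujanShorQ (m+1) (k:ℤ)) * y^k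
         + ((m:A) + 1 + (k:A)) * aeval t (ramanujanShorQ (m+1) (k:ℤ)) * y^(k+1)) := by
  have h1 : ∑ k ∈ Finset.range (m+2), aeval t (ramanujanShorQ (m+2) (k:ℤ)) * y^k
      = ∑ k ∈ Finset.range (m+2),
          ((t + (m:A) + 1) * aeval t (ramanujanShorQ (m+1) (k:ℤ)) * y^k
           + ((m:A) + (k:A)) * aeval t (ramanujanShorQ (m+1) ((k:ℤ)-1)) * y^k) := by
    refine Finset.sum_congr rfl fun k hk => ?_
    rw [Finset.mem_range] at hk
    rw [Q_rec m (k:ℤ) (by omega) (by push_cast; omega)]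
    simp only [map_add, map_mul, aeval_X, aeval_C, map_natCast, map_one,
      Int.cast_add, Int.cast_natCast]
    ring
  rw [h1, Finset.sum_add_distrib]
  have hA : ∑ k ∈ Finset.range (m+2), (t + (m:A) + 1) * aeval t (ramanujanShorQ (m+1) (k:ℤ)) * y^k
      = ∑ k ∈ Finset.range (m+1), (t + (m:A) + 1) * aeval t (ramanujanShorQ (m+1) (k:ℤ)) * y^k := by
    rw [Finset.sum_range_succ,
      show ramanujanShorQ (m+1) (((m+1:ℕ)):ℤ) = 0 from Q_ge _ _ (by push_cast; omega)]
    simp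
  have hB : ∑ k ∈ Finset.range (m+2), ((m:A) + (k:A)) * aeval t (ramanujanShorQ (m+1) ((k:ℤ)-1)) * y^k
      = ∑ k ∈ Finset.range (m+1), ((m:A) + 1 + (k:A)) * aeval t (ramanujanShorQ (m+1) (k:ℤ)) * y^(k+1) := by
    rw [Finset.sum_range_succ']
    rw [show ramanujanShorQ (m+1) (((0:ℕ):ℤ)-1) = 0 from Q_neg _ _ (by omega)]
    simp only [map_zero, mul_zero, zero_mul, add_zero, pow_zero]
    refine Finset.sum_congr rfl fun k hk => ?_
    rw [show ((k+1:ℕ):ℤ) - 1 = (k:ℤ) by push_cast; omega]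
    push_cast
    ring
  rw [hA, hB, ← Finset.sum_add_distrib]

set_option maxHeartbeats 2000000 in
theorem dn_axr (D : Derivation ℚ (FractionRing (MvPolynomial (Fin 4) ℚ))
      (FractionRing (MvPolynomial (Fin 4) ℚ)))
    (hDa : D (gv 0) = gv 0 * gv 1 * gv 2)
    (hDx : D (gv 1) = gv 1 * gv 2 * gv 3)
    (hDy : D (gv 2) = (gv 2) ^ 3 * gv 3)
    (hDw : D (gv 3) = gv 2 * (gv 3) ^ 2)
    (n r : ℕ) (hn : 1 ≤ n) :
    (⇑D)^[n] (gv 0 * (gv 1) ^ r)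
      = gv 0 * (gv 1) ^ r * (gv 2) ^ n * (gv 3) ^ n * ((r : _) + gv 1 * (gv 3)⁻¹)
        * ∑ k ∈ Finset.range n,
            Polynomial.aeval ((r : _) + gv 1 * (gv 3)⁻¹) (ramanujanShorQ n (k : ℤ))
              * (gv 2) ^ k := by
  have hw0 : gv 3 ≠ 0 := fun h => MvPolynomial.X_ne_zero (R := ℚ) 3
    ((map_eq_zero_iff _ (IsFractionRing.injective (MvPolynomial (Fin 4) ℚ)
      (FractionRing (MvPolynomial (Fin 4) ℚ)))).mp h)
  set t : FractionRing (MvPolynomial (Fin 4) ℚ) := (r : _) + gv 1 * (gv 3)⁻¹ with ht_def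
  have ht0 : D t = 0 := by
    rw [ht_def]
    simp only [map_add, Derivation.map_natCast, Derivation.leibniz, Derivation.leibniz_inv,
      hDx, hDw, smul_eq_mul]
    field_simp
    ring
  have hpow : ∀ k : ℕ, D (t ^ k) = 0 := by
    intro k; induction k with
    | zero => simp
    | succ k ih => rw [pow_succ, Derivation.leibniz, ih, ht0]; simp
  have haev : ∀ p : Polynomial ℚ, D (aeval t p) = 0 := by
    intro p
    induction p using Polynomial.induction_on' with
    | add p q hp hq => simp [hp, hq]
    | monomial k a =>
        rw [aeval_monomial, Derivation.leibniz, hpow, Derivation.map_algebraMap]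
        simp
  have hxr : ∀ s : ℕ, D (gv 1 ^ s) = s * gv 1 ^ s * gv 2 * gv 3 := by
    intro s; induction s with
    | zero => simp
    | succ s ih =>
        rw [pow_succ, Derivation.leibniz, ih, hDx]
        simp only [smul_eq_mul]; push_cast; ring
  have hyk : ∀ s : ℕ, D (gv 2 ^ s) = s * gv 2 ^ (s+2) * gv 3 := by
    intro s; induction s with
    | zero => simp
    | succ s ih =>
        rw [pow_succ, Derivation.leibniz, ih, hDy]
        simp only [smul_eq_mul]; push_cast; ring
  have hwk : ∀ s : ℕ, D (gv 3 ^ s) = s * gv 2 * gv 3 ^ (s+1) := by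
    intro s; induction s with
    | zero => simp
    | succ s ih =>
        rw [pow_succ, Derivation.leibniz, ih, hDw]
        simp only [smul_eq_mul]; push_cast; ring
  induction n, hn using Nat.le_induction with
  | base =>
      rw [Function.iterate_one, Finset.sum_range_one]
      rw [show ramanujanShorQ 1 ((0:ℕ):ℤ) = 1 by norm_num [ramanujanShorQ]]
      rw [Derivation.leibniz, hDa, hxr r]
      simp only [smul_eq_mul, map_one, pow_zero, pow_one, mul_one]
      rw [ht_def]
      field_simp
  | succ n hn ih =>
      obtain ⟨m, rfl⟩ : ∃ m, n = m + 1 := ⟨n - 1, by omega⟩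
      rw [Function.iterate_succ_apply', ih]
      set S := ∑ k ∈ Finset.range (m+1), aeval t (ramanujanShorQ (m+1) (k:ℤ)) * gv 2 ^ k with hS_def
      set U := ∑ k ∈ Finset.range (m+1), (k : FractionRing (MvPolynomial (Fin 4) ℚ)) * aeval t (ramanujanShorQ (m+1) (k:ℤ)) * gv 2 ^ k with hU_def
      have hDS : D S = gv 2 ^ 2 * gv 3 * U := by
        rw [hS_def, map_sum, hU_def, Finset.mul_sum]
        refine Finset.sum_congr rfl fun k _ => ?_
        rw [Derivation.leibniz, haev, hyk]
        simp only [smul_eq_mul, mul_zero, add_zero]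
        ring
      have hsplit : ∑ k ∈ Finset.range (m+1),
            ((t + (m:FractionRing (MvPolynomial (Fin 4) ℚ)) + 1)
              * aeval t (ramanujanShorQ (m+1) (k:ℤ)) * gv 2 ^ k
             + ((m:FractionRing (MvPolynomial (Fin 4) ℚ)) + 1 + (k:FractionRing (MvPolynomial (Fin 4) ℚ)))
              * aeval t (ramanujanShorQ (m+1) (k:ℤ)) * gv 2 ^ (k+1))
          = (t + (m:FractionRing (MvPolynomial (Fin 4) ℚ)) + 1) * S
            + (((m:FractionRing (MvPolynomial (Fin 4) ℚ)) + 1) * gv 2) * S + gv 2 * U := by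
        rw [hS_def, hU_def, Finset.mul_sum, Finset.mul_sum, Finset.mul_sum,
          ← Finset.sum_add_distrib, ← Finset.sum_add_distrib]
        refine Finset.sum_congr rfl fun k _ => ?_
        ring
      rw [sum_step t (gv 2) m, hsplit]
      simp only [Derivation.leibniz, smul_eq_mul, hDa, hxr, hyk, hwk, ht0, hDS]
      rw [ht_def]
      push_cast
      field_simp
      ring
end

section
/- For every integer n ≥ 1, D^{n}(y) = ∑_{k=0}^{n} Q_{n+1,k}(−1) · y^{n+1+k} · w^{n}, as an identity in the polynomial ring R = ℚ[a,x,y,w], where Q_{n+1,k}(−1) ∈ ℚ denotes the evaluation of the polynomial Q_{n+1,k} at −1. -/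
open Polynomial

lemma rsQ_neg : ∀ (n : ℕ) (k : ℤ), k < 0 → ramanujanShorQ n k = 0
  | 0, _, _ => rfl
  | 1, k, hk => by simp [ramanujanShorQ]; omega
  | (n+2), k, hk => by rw [ramanujanShorQ, if_neg (by omega)]

lemma rsQ_ge : ∀ (n : ℕ) (k : ℤ), (n : ℤ) ≤ k → ramanujanShorQ n k = 0
  | 0, _, _ => rfl
  | 1, k, hk => by simp [ramanujanShorQ]; omega
  | (n+2), k, hk => by rw [ramanujanShorQ, if_neg (by push_cast at hk ⊢; omega)]

lemma rsQ_rec (n k : ℕ) :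
    Polynomial.eval (-1:ℚ) (ramanujanShorQ (n+2) (k:ℤ)) =
      (n:ℚ) * Polynomial.eval (-1) (ramanujanShorQ (n+1) (k:ℤ))
      + ((n:ℚ)+(k:ℚ)) * Polynomial.eval (-1) (ramanujanShorQ (n+1) ((k:ℤ)-1)) := by
  by_cases h : (k:ℤ) ≤ (n:ℤ)+1
  · rw [ramanujanShorQ, if_pos ⟨by positivity, h⟩]
    simp [eval_add, eval_mul]
    try push_cast
    try ring
  · rw [rsQ_ge (n+2) k (by push_cast; omega), rsQ_ge (n+1) k (by push_cast; omega),
      rsQ_ge (n+1) ((k:ℤ)-1) (by push_cast; omega)]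
    simp

lemma D_term (D : Derivation ℚ (MvPolynomial (Fin 4) ℚ) (MvPolynomial (Fin 4) ℚ))
    (hDy : D (MvPolynomial.X 2) = (MvPolynomial.X 2) ^ 3 * MvPolynomial.X 3)
    (hDw : D (MvPolynomial.X 3) = MvPolynomial.X 2 * (MvPolynomial.X 3) ^ 2)
    (c : ℚ) (a b : ℕ) :
    D (MvPolynomial.C c * MvPolynomial.X 2 ^ (a+1) * MvPolynomial.X 3 ^ (b+1)) =
      MvPolynomial.C (c*((a:ℚ)+1)) * MvPolynomial.X 2 ^ (a+3) * MvPolynomial.X 3 ^ (b+2)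
      + MvPolynomial.C (c*((b:ℚ)+1)) * MvPolynomial.X 2 ^ (a+2) * MvPolynomial.X 3 ^ (b+2) := by
  have hy : D (MvPolynomial.X 2 ^ (a+1))
      = (MvPolynomial.C ((a:ℚ)+1)) * (MvPolynomial.X 2 ^ (a+3) * MvPolynomial.X 3) := by
    rw [Derivation.leibniz_pow, hDy]
    simp only [Nat.add_sub_cancel, nsmul_eq_mul, smul_eq_mul, map_add, map_natCast, map_one]
    push_cast
    ring
  have hw : D (MvPolynomial.X 3 ^ (b+1))
      = (MvPolynomial.C ((b:ℚ)+1)) * (MvPolynomial.X 2 * MvPolynomial.X 3 ^ (b+2)) := by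
    rw [Derivation.leibniz_pow, hDw]
    simp only [Nat.add_sub_cancel, nsmul_eq_mul, smul_eq_mul, map_add, map_natCast, map_one]
    push_cast
    ring
  have hC : ∀ p : MvPolynomial (Fin 4) ℚ, MvPolynomial.C c * p = c • p := by
    intro p; rw [MvPolynomial.smul_eq_C_mul]
  rw [mul_assoc, hC, Derivation.map_smul, Derivation.leibniz, hy, hw]
  rw [← hC]
  simp only [smul_eq_mul, map_add, map_natCast, map_one, map_mul]
  ring

open MvPolynomial in
theorem dn_y (D : Derivation ℚ (MvPolynomial (Fin 4) ℚ) (MvPolynomial (Fin 4) ℚ))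
    (hDa : D (X 0) = X 0 * X 1 * X 2)
    (hDx : D (X 1) = X 1 * X 2 * X 3)
    (hDy : D (X 2) = (X 2) ^ 3 * X 3)
    (hDw : D (X 3) = X 2 * (X 3) ^ 2)
    (n : ℕ) (hn : 1 ≤ n) :
    (⇑D)^[n] (X 2)
      = ∑ k ∈ Finset.range (n + 1),
          MvPolynomial.C (Polynomial.eval (-1) (ramanujanShorQ (n + 1) (k : ℤ)))
            * (X 2) ^ (n + 1 + k) * (X 3) ^ n := by
  induction n with
  | zero => omega
  | succ m ih =>
    rcases Nat.eq_zero_or_pos m with rfl | hm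
    · -- base case n = 1
      rw [Function.iterate_one, hDy, Finset.sum_range_succ, Finset.sum_range_succ,
        Finset.sum_range_zero]
      norm_num [ramanujanShorQ]
    · have IH := ih hm
      obtain ⟨p, rfl⟩ : ∃ p, m = p + 1 := ⟨m - 1, by omega⟩
      rw [Function.iterate_succ_apply', IH, map_sum]
      have e : True := trivial
      set A : ℕ → MvPolynomial (Fin 4) ℚ := fun k =>
        MvPolynomial.C (Polynomial.eval (-1:ℚ) (ramanujanShorQ (p+2) (k:ℤ)) * ((p:ℚ)+(k:ℚ)+2))
          * MvPolynomial.X 2 ^ (p+4+k) * MvPolynomial.X 3 ^ (p+2) with hA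
      set B : ℕ → MvPolynomial (Fin 4) ℚ := fun k =>
        MvPolynomial.C (Polynomial.eval (-1:ℚ) (ramanujanShorQ (p+2) (k:ℤ)) * ((p:ℚ)+1))
          * MvPolynomial.X 2 ^ (p+3+k) * MvPolynomial.X 3 ^ (p+2) with hB
      have key : ∀ k : ℕ,
          D (MvPolynomial.C (Polynomial.eval (-1:ℚ) (ramanujanShorQ (p+2) (k:ℤ)))
              * MvPolynomial.X 2 ^ (p+2+k) * MvPolynomial.X 3 ^ (p+1)) = A k + B k := by
        intro k
        have h := D_term D hDy hDw (Polynomial.eval (-1:ℚ) (ramanujanShorQ (p+2) (k:ℤ))) (p+1+k) p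
        rw [show p+1+k+1 = p+2+k from by ring] at h
        rw [h, show p+1+k+3 = p+4+k from by ring, show p+1+k+2 = p+3+k from by ring,
          hA, hB]
        push_cast
        ring_nf
      have hstep : ∀ k : ℕ,
          MvPolynomial.C (Polynomial.eval (-1:ℚ) (ramanujanShorQ (p+3) ((k:ℤ)+1)))
            * MvPolynomial.X 2 ^ (p+4+k) * MvPolynomial.X 3 ^ (p+2) = A k + B (k+1) := by
        intro k
        have hr := rsQ_rec (p+1) (k+1)
        rw [show (p+1+2) = p+3 from by ring, show (p+1+1) = p+2 from by ring] at hr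
        push_cast at hr
        rw [show ((k:ℤ)+1-1) = (k:ℤ) from by ring] at hr
        rw [hA, hB, hr]
        simp only [map_add, map_mul, map_one, map_natCast, map_ofNat]
        push_cast
        ring
      have hzero :
          MvPolynomial.C (Polynomial.eval (-1:ℚ) (ramanujanShorQ (p+3) ((0:ℕ):ℤ)))
            * MvPolynomial.X 2 ^ (p+3+0) * MvPolynomial.X 3 ^ (p+2) = B 0 := by
        have hr := rsQ_rec (p+1) 0
        rw [show (p+1+2) = p+3 from by ring, show (p+1+1) = p+2 from by ring] at hr
        rw [show ((0:ℕ):ℤ)-1 = (-1:ℤ) from by norm_num, rsQ_neg (p+2) (-1) (by omega)] at hr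
        simp only [Polynomial.eval_zero, mul_zero, add_zero] at hr
        rw [hB]
        push_cast at hr ⊢
        rw [hr]
        simp only [map_add, map_mul, map_one, map_natCast, map_ofNat]
        push_cast
        ring
      have hBtop : B (p+2) = 0 := by
        have h0 : ramanujanShorQ (p+2) (((p+2:ℕ)):ℤ) = 0 := rsQ_ge _ _ (by push_cast; omega)
        simp only [hB, h0, Polynomial.eval_zero, zero_mul, map_zero]
      calc (∑ k ∈ Finset.range (p+1+1),
              D (MvPolynomial.C (Polynomial.eval (-1:ℚ) (ramanujanShorQ (p+1+1) (k:ℤ)))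
                * MvPolynomial.X 2 ^ (p+1+1+k) * MvPolynomial.X 3 ^ (p+1)))
          = ∑ k ∈ Finset.range (p+2), (A k + B k) := by
            apply Finset.sum_congr rfl
            intro k _
            exact key k
        _ = ∑ k ∈ Finset.range (p+2), A k + ∑ k ∈ Finset.range (p+2), B k :=
            Finset.sum_add_distrib
        _ = ∑ k ∈ Finset.range (p+2), A k
            + (∑ k ∈ Finset.range (p+1), B (k+1) + B 0) := by
            rw [Finset.sum_range_succ' B (p+1)]
        _ = ∑ k ∈ Finset.range (p+2), A k
            + (∑ k ∈ Finset.range (p+2), B (k+1) + B 0) := by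
            rw [Finset.sum_range_succ (fun k => B (k+1)) (p+1),
              show p+1+1 = p+2 from rfl, hBtop, add_zero]
        _ = ∑ k ∈ Finset.range (p+2), (A k + B (k+1)) + B 0 := by
            rw [Finset.sum_add_distrib]
            ring
        _ = ∑ k ∈ Finset.range (p+3),
              MvPolynomial.C (Polynomial.eval (-1:ℚ) (ramanujanShorQ (p+3) (k:ℤ)))
                * MvPolynomial.X 2 ^ (p+3+k) * MvPolynomial.X 3 ^ (p+2) := by
            rw [Finset.sum_range_succ' _ (p+2)]
            congr 1
            · apply Finset.sum_congr rfl
              intro k _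
              rw [show p+3+(k+1) = p+4+k from by ring]
              rw [← hstep k]
              try push_cast
              try ring
            · rw [← hzero]
              try push_cast
              try ring
end
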